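/- arXiv:1912.05197 — 2 statements merged into one kernel-verified Lean document; each statement's English description precedes it below -/
import Mathlib

section
/- For every index i ∈ {1,…,n}, with Δ = {1,…,n}∖{i}, the principal submatrix L[[Δ]] of the Laplacian L obtained by deleting the i-th block row and i-th block column is positive definite. -/
open Matrix BigOperators

noncomputable section

/-- The Laplacian of a graph on `Fin n` whose edges carry `s × s` real matrix
weights `W i j`: the `(i,j)` block is `-(W i j)⁻¹` if `i ≠ j` are adjacent,
`0` if `i ≠ j` are non-adjacent, and `∑ k adjacent to i, (W i k)⁻¹` if `i = j`. -/
def lap (n s : ℕ) (G : SimpleGraph (Fin n)) [DecidableRel G.Adj]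
    (W : Fin n → Fin n → Matrix (Fin s) (Fin s) ℝ) :
    Matrix (Fin n × Fin s) (Fin n × Fin s) ℝ :=
  Matrix.of fun p q =>
    if p.1 = q.1 then (∑ k ∈ Finset.univ.filter (fun k => G.Adj p.1 k), (W p.1 k)⁻¹) p.2 q.2
    else if G.Adj p.1 q.1 then -((W p.1 q.1)⁻¹ p.2 q.2) else 0

/-- The inertia `(n₋, n₀, n₊)` of a real symmetric matrix: the numbers of
negative, zero and positive eigenvalues, counted with multiplicity.
(Junk value `(0,0,0)` on non-Hermitian matrices.) -/
def inertia {m : Type*} [Fintype m] [DecidableEq m] (A : Matrix m m ℝ) : ℕ × ℕ × ℕ :=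
  if hA : A.IsHermitian then
    ((Finset.univ.filter fun i => hA.eigenvalues i < 0).card,
     (Finset.univ.filter fun i => hA.eigenvalues i = 0).card,
     (Finset.univ.filter fun i => 0 < hA.eigenvalues i).card)
  else (0, 0, 0)

/-- A real matrix is negative definite. -/
def negDef {m : Type*} [Fintype m] (M : Matrix m m ℝ) : Prop :=
  M.IsHermitian ∧ ∀ x : m → ℝ, x ≠ 0 → x ⬝ᵥ M.mulVec x < 0

/-- A real matrix is negative semidefinite. -/
def negSemidef {m : Type*} [Fintype m] (M : Matrix m m ℝ) : Prop :=
  M.IsHermitian ∧ ∀ x : m → ℝ, x ⬝ᵥ M.mulVec x ≤ 0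

/-- The `ns × ns` block matrix `J` each of whose `n²` blocks is `I_s`. -/
def Jmat (n s : ℕ) : Matrix (Fin n × Fin s) (Fin n × Fin s) ℝ :=
  Matrix.of fun p q => if p.2 = q.2 then 1 else 0

/-- The `ns × s` matrix `U = e ⊗ I_s`, `e` the all-ones vector. -/
def Umat (n s : ℕ) : Matrix (Fin n × Fin s) (Fin s) ℝ :=
  Matrix.of fun p a => if p.2 = a then 1 else 0

section Aux

variable {n s : ℕ} (G : SimpleGraph (Fin n)) [DecidableRel G.Adj]
  (W : Fin n → Fin n → Matrix (Fin s) (Fin s) ℝ)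

private lemma Tswap (g : Fin n → Fin n → ℝ) :
    ∑ j, ∑ k, (if G.Adj j k then g j k else 0)
      = ∑ j, ∑ k, (if G.Adj j k then g k j else 0) := by
  rw [Finset.sum_comm]
  exact Finset.sum_congr rfl fun a _ => Finset.sum_congr rfl fun b _ =>
    if_congr (G.adj_comm b a) rfl rfl

private lemma lap_split :
    lap n s G W =
      (Matrix.of fun p q : Fin n × Fin s =>
        if p.1 = q.1 then (∑ k ∈ Finset.univ.filter (fun k => G.Adj p.1 k), (W p.1 k)⁻¹) p.2 q.2 else 0)
      - (Matrix.of fun p q : Fin n × Fin s =>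
        if G.Adj p.1 q.1 then (W p.1 q.1)⁻¹ p.2 q.2 else 0) := by
  ext p q
  by_cases h : p.1 = q.1
  · have : ¬ G.Adj p.1 q.1 := by rw [h]; exact G.irrefl
    simp [lap, h, this]
  · simp only [lap, Matrix.sub_apply, Matrix.of_apply, if_neg h]
    split <;> simp

private lemma quad_D (x : Fin n × Fin s → ℝ) :
    x ⬝ᵥ (Matrix.of fun p q : Fin n × Fin s =>
        if p.1 = q.1 then (∑ k ∈ Finset.univ.filter (fun k => G.Adj p.1 k), (W p.1 k)⁻¹) p.2 q.2 else 0) *ᵥ x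
      = ∑ j, ∑ k, (if G.Adj j k then ∑ a, ∑ b, x (j,a) * (W j k)⁻¹ a b * x (j,b) else 0) := by
  simp only [dotProduct, mulVec, Fintype.sum_prod_type, Matrix.of_apply, Finset.mul_sum]
  refine Finset.sum_congr rfl fun j _ => ?_
  have h1 : ∀ a : Fin s,
      (∑ k, ∑ b, x (j,a) * ((if j = k then (∑ k' ∈ Finset.univ.filter (fun k' => G.Adj j k'), (W j k')⁻¹) a b else 0) * x (k,b)))
      = ∑ b, x (j,a) * ((∑ k' ∈ Finset.univ.filter (fun k' => G.Adj j k'), (W j k')⁻¹) a b * x (j,b)) := by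
    intro a
    rw [Finset.sum_eq_single j]
    · simp
    · intro k _ hk
      simp [Ne.symm hk]
    · simp
  simp only [h1]
  rw [← Finset.sum_filter]
  simp only [Matrix.sum_apply, Finset.sum_mul, Finset.mul_sum]
  have h2 : ∀ a : Fin s, ∑ b : Fin s, ∑ k ∈ Finset.univ.filter (fun k' => G.Adj j k'),
        x (j, a) * ((W j k)⁻¹ a b * x (j, b))
      = ∑ k ∈ Finset.univ.filter (fun k' => G.Adj j k'), ∑ b : Fin s,
        x (j, a) * ((W j k)⁻¹ a b * x (j, b)) := fun a => Finset.sum_comm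
  simp only [h2]
  rw [Finset.sum_comm]
  exact Finset.sum_congr rfl fun k _ => Finset.sum_congr rfl fun a _ =>
    Finset.sum_congr rfl fun b _ => by ring

private lemma quad_B (x : Fin n × Fin s → ℝ) :
    x ⬝ᵥ (Matrix.of fun p q : Fin n × Fin s =>
        if G.Adj p.1 q.1 then (W p.1 q.1)⁻¹ p.2 q.2 else 0) *ᵥ x
      = ∑ j, ∑ k, (if G.Adj j k then ∑ a, ∑ b, x (j,a) * (W j k)⁻¹ a b * x (k,b) else 0) := by
  simp only [dotProduct, mulVec, Fintype.sum_prod_type, Matrix.of_apply, Finset.mul_sum]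
  refine Finset.sum_congr rfl fun j _ => ?_
  rw [Finset.sum_comm]
  refine Finset.sum_congr rfl fun k _ => ?_
  simp only [mul_ite, ite_mul, zero_mul, mul_zero, Finset.sum_ite_irrel, Finset.sum_const_zero]
  refine if_congr Iff.rfl ?_ rfl
  exact Finset.sum_congr rfl fun a _ => Finset.sum_congr rfl fun b _ => by ring

private lemma lap_quadform (hWsym : ∀ i j, W i j = W j i) (x : Fin n × Fin s → ℝ) :
    2 * (x ⬝ᵥ (lap n s G W) *ᵥ x)
      = ∑ j, ∑ k, (if G.Adj j k then
          ∑ a, ∑ b, (x (j,a) - x (k,a)) * (W j k)⁻¹ a b * (x (j,b) - x (k,b)) else 0) := by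
  have hA : ∀ j k : Fin n, (W k j)⁻¹ = (W j k)⁻¹ := fun j k => by rw [hWsym]
  rw [lap_split G W, sub_mulVec, dotProduct_sub, quad_D G W x, quad_B G W x]
  have e1 : ∀ j k : Fin n, (if G.Adj j k then
          ∑ a, ∑ b, (x (j,a) - x (k,a)) * (W j k)⁻¹ a b * (x (j,b) - x (k,b)) else 0)
      = (if G.Adj j k then ∑ a, ∑ b, x (j,a) * (W j k)⁻¹ a b * x (j,b) else 0)
        - (if G.Adj j k then ∑ a, ∑ b, x (j,a) * (W j k)⁻¹ a b * x (k,b) else 0)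
        - (if G.Adj j k then ∑ a, ∑ b, x (k,a) * (W j k)⁻¹ a b * x (j,b) else 0)
        + (if G.Adj j k then ∑ a, ∑ b, x (k,a) * (W j k)⁻¹ a b * x (k,b) else 0) := by
    intro j k
    split
    · simp only [← Finset.sum_sub_distrib, ← Finset.sum_add_distrib]
      exact Finset.sum_congr rfl fun a _ => Finset.sum_congr rfl fun b _ => by ring
    · ring
  simp only [e1, Finset.sum_add_distrib, Finset.sum_sub_distrib]
  rw [Tswap G (fun j k => ∑ a, ∑ b, x (k,a) * (W j k)⁻¹ a b * x (k,b))]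
  rw [Tswap G (fun j k => ∑ a, ∑ b, x (k,a) * (W j k)⁻¹ a b * x (j,b))]
  simp only [hA]
  ring

end Aux

section Aux2

variable {n s : ℕ} (G : SimpleGraph (Fin n)) [DecidableRel G.Adj]
  (W : Fin n → Fin n → Matrix (Fin s) (Fin s) ℝ)

private lemma lap_isHermitian (hWsym : ∀ i j, W i j = W j i)
    (hWpd : ∀ i j, G.Adj i j → (W i j).PosDef) :
    (lap n s G W).IsHermitian := by
  have hsym : ∀ j k, G.Adj j k → ∀ a b, (W j k)⁻¹ a b = (W j k)⁻¹ b a := by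
    intro j k h a b
    have := ((hWpd j k h).inv).isHermitian.apply b a
    simpa using this
  ext p q
  simp only [conjTranspose_apply, lap, Matrix.of_apply, star_trivial]
  by_cases h : p.1 = q.1
  · rw [if_pos h.symm, if_pos h, ← h]
    rw [Matrix.sum_apply, Matrix.sum_apply]
    refine Finset.sum_congr rfl fun k hk => ?_
    exact hsym _ _ (by simpa using hk) _ _
  · rw [if_neg (Ne.symm h), if_neg h]
    by_cases hadj : G.Adj p.1 q.1
    · rw [if_pos (G.adj_symm hadj), if_pos hadj, hWsym q.1 p.1]
      rw [hsym _ _ hadj p.2 q.2]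
    · rw [if_neg (fun hc => hadj (G.adj_symm hc)), if_neg hadj]

private lemma walk_const {n s : ℕ} (G : SimpleGraph (Fin n))
    (x : Fin n × Fin s → ℝ)
    (hz : ∀ j k, G.Adj j k → ∀ a, x (j, a) = x (k, a)) :
    ∀ (j i : Fin n) (_ : G.Walk j i) (a : Fin s), x (j, a) = x (i, a) := by
  intro j i w
  induction w with
  | nil => intro a; rfl
  | cons h p ih =>
    intro a
    rw [hz _ _ h a]
    exact ih a

private lemma walk_zero {n s : ℕ} (G : SimpleGraph (Fin n))
    (x : Fin n × Fin s → ℝ) (i : Fin n) (hx0 : ∀ b, x (i, b) = 0)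
    (hz : ∀ j k, G.Adj j k → ∀ a, x (j, a) = x (k, a)) :
    ∀ (j : Fin n) (_ : G.Walk j i) (a : Fin s), x (j, a) = 0 := by
  intro j w a
  rw [walk_const G x hz j i w a]
  exact hx0 a

end Aux2

/-- For every i, the principal submatrix L[[Δ]], Δ = [n] ∖ {i}, of the
Laplacian is positive definite. -/
theorem stmt3 (n s : ℕ) (hn : 0 < n) (hs : 0 < s)
    (G : SimpleGraph (Fin n)) [DecidableRel G.Adj] (hG : G.Connected)
    (W : Fin n → Fin n → Matrix (Fin s) (Fin s) ℝ)
    (hWsym : ∀ i j, W i j = W j i)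
    (hWpd : ∀ i j, G.Adj i j → (W i j).PosDef)
    (i : Fin n) :
    ((lap n s G W).submatrix
      (fun p : {j : Fin n // j ≠ i} × Fin s => ((p.1 : Fin n), p.2))
      (fun p : {j : Fin n // j ≠ i} × Fin s => ((p.1 : Fin n), p.2))).PosDef := by
  classical
  set L := lap n s G W with hLdef
  have hermL : L.IsHermitian := lap_isHermitian G W hWsym hWpd
  refine Matrix.PosDef.of_dotProduct_mulVec_pos (hermL.submatrix _) ?_
  intro y hy
  set x : Fin n × Fin s → ℝ := fun p => if h : p.1 = i then 0 else y (⟨p.1, h⟩, p.2) with hxdef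
  have hx0 : ∀ b, x (i, b) = 0 := fun b => by simp [hxdef]
  have hxy : ∀ (j : {j : Fin n // j ≠ i}) (a : Fin s), x (↑j, a) = y (j, a) := by
    intro j a; simp [hxdef, j.2]
  have transfer : y ⬝ᵥ (L.submatrix
      (fun p : {j : Fin n // j ≠ i} × Fin s => ((p.1 : Fin n), p.2))
      (fun p : {j : Fin n // j ≠ i} × Fin s => ((p.1 : Fin n), p.2))) *ᵥ y
      = x ⬝ᵥ L *ᵥ x := by
    simp only [dotProduct, mulVec, submatrix_apply, Fintype.sum_prod_type]
    have inner : ∀ (p : Fin n × Fin s),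
        (∑ k : {j : Fin n // j ≠ i}, ∑ b, L p (↑k, b) * x (↑k, b))
          = ∑ k : Fin n, ∑ b, L p (k, b) * x (k, b) := by
      intro p
      rw [← Finset.sum_subtype (Finset.univ.erase i)
        (fun j => by simp) (fun k => ∑ b, L p (k, b) * x (k, b))]
      exact Finset.sum_erase _ (by simp [hx0])
    have outer :
        (∑ j : {j : Fin n // j ≠ i}, ∑ a, x (↑j, a) * (∑ k : Fin n, ∑ b, L (↑j, a) (k, b) * x (k, b)))
          = ∑ j : Fin n, ∑ a, x (j, a) * (∑ k : Fin n, ∑ b, L (j, a) (k, b) * x (k, b)) := by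
      rw [← Finset.sum_subtype (Finset.univ.erase i)
        (fun j => by simp) (fun j => ∑ a, x (j, a) * (∑ k : Fin n, ∑ b, L (j, a) (k, b) * x (k, b)))]
      exact Finset.sum_erase _ (by simp [hx0])
    calc ∑ j : {j : Fin n // j ≠ i}, ∑ a, y (j, a) * (∑ k : {j : Fin n // j ≠ i}, ∑ b, L (↑j, a) (↑k, b) * y (k, b))
        = ∑ j : {j : Fin n // j ≠ i}, ∑ a, x (↑j, a) * (∑ k : Fin n, ∑ b, L (↑j, a) (k, b) * x (k, b)) := by
          refine Finset.sum_congr rfl fun j _ => Finset.sum_congr rfl fun a _ => ?_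
          rw [hxy j a, ← inner (↑j, a)]
          refine congrArg _ (Finset.sum_congr rfl fun k _ => Finset.sum_congr rfl fun b _ => ?_)
          rw [hxy k b]
      _ = ∑ j : Fin n, ∑ a, x (j, a) * (∑ k : Fin n, ∑ b, L (j, a) (k, b) * x (k, b)) := outer
  have quadeq := lap_quadform G W hWsym x
  have hnonneg : ∀ j k : Fin n, 0 ≤ (if G.Adj j k then
      ∑ a, ∑ b, (x (j,a) - x (k,a)) * (W j k)⁻¹ a b * (x (j,b) - x (k,b)) else 0) := by
    intro j k
    split
    · rename_i h
      have hps := ((hWpd j k h).inv).posSemidef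
      have h2 := hps.dotProduct_mulVec_nonneg (fun a => x (j,a) - x (k,a))
      simpa [dotProduct, mulVec, Finset.mul_sum, mul_assoc] using h2
    · exact le_refl 0
  have hsum_nonneg : (0:ℝ) ≤ ∑ j, ∑ k, (if G.Adj j k then
      ∑ a, ∑ b, (x (j,a) - x (k,a)) * (W j k)⁻¹ a b * (x (j,b) - x (k,b)) else 0) :=
    Finset.sum_nonneg fun j _ => Finset.sum_nonneg fun k _ => hnonneg j k
  have hle : 0 ≤ x ⬝ᵥ L *ᵥ x := by
    rw [← quadeq] at hsum_nonneg; linarith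
  have hne : x ⬝ᵥ L *ᵥ x ≠ 0 := by
    intro h0
    have h2 : ∑ j, ∑ k, (if G.Adj j k then
        ∑ a, ∑ b, (x (j,a) - x (k,a)) * (W j k)⁻¹ a b * (x (j,b) - x (k,b)) else 0) = 0 := by
      rw [← quadeq, h0]; ring
    have hterm := (Finset.sum_eq_zero_iff_of_nonneg
      (fun j _ => Finset.sum_nonneg fun k _ => hnonneg j k)).mp h2
    have hz : ∀ j k, G.Adj j k → ∀ a, x (j, a) = x (k, a) := by
      intro j k hadj
      have hkz := (Finset.sum_eq_zero_iff_of_nonneg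
        (fun k _ => hnonneg j k)).mp (hterm j (Finset.mem_univ j)) k (Finset.mem_univ k)
      rw [if_pos hadj] at hkz
      have hd : (fun a => x (j,a) - x (k,a)) = 0 := by
        by_contra hd
        have hpos := ((hWpd j k hadj).inv).dotProduct_mulVec_pos hd
        have : (0:ℝ) < ∑ a, ∑ b, (x (j,a) - x (k,a)) * (W j k)⁻¹ a b * (x (j,b) - x (k,b)) := by
          simpa [dotProduct, mulVec, Finset.mul_sum, mul_assoc] using hpos
        linarith [hkz]
      intro a
      have := congrFun hd a
      simp only [Pi.zero_apply] at this
      linarith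
    have hwalk := walk_zero G x i hx0 hz
    have hy0 : y = 0 := by
      funext p
      rcases p with ⟨⟨j, hj⟩, a⟩
      rw [← hxy ⟨j, hj⟩ a]
      exact hwalk j (hG.preconnected j i).some a
    exact hy hy0
  have : 0 < x ⬝ᵥ L *ᵥ x := lt_of_le_of_ne hle (Ne.symm hne)
  simpa [star_trivial, transfer] using this
end
end

section
/- For every real number β ≥ 0, the matrix (D⁻¹ − βL)⁻¹ is negative semidefinite on M, the null space of J; that is, pᵀ(D⁻¹ − βL)⁻¹p ≤ 0 for every p ∈ ℝ^{ns} with Jp = 0. -/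
open Matrix BigOperators

noncomputable section

section TreeSide
variable {V : Type*} [DecidableEq V] {T : SimpleGraph V}

private lemma side_step
    (huniq : ∀ ⦃i j : V⦄ (p q : T.Walk i j), p.IsPath → q.IsPath → p = q)
    (P : ∀ i j : V, T.Walk i j) (hP : ∀ i j, (P i j).IsPath)
    {v i i' : V} {e : Sym2 V} (hii' : T.Adj i i') (hne : s(i, i') ≠ e)
    (h : e ∉ (P i' v).edges) : e ∉ (P i v).edges := by
  by_cases hmem : i ∈ (P i' v).support
  · rw [huniq (P i v) ((P i' v).dropUntil i hmem) (hP i v) ((hP i' v).dropUntil hmem)]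
    intro hcon
    exact h (SimpleGraph.Walk.edges_dropUntil_subset _ hmem hcon)
  · rw [huniq (P i v) (SimpleGraph.Walk.cons hii' (P i' v)) (hP i v) ((hP i' v).cons hmem),
      SimpleGraph.Walk.edges_cons]
    simp only [List.mem_cons, not_or]
    exact ⟨fun hc => hne hc.symm, h⟩

private lemma side_step_iff
    (huniq : ∀ ⦃i j : V⦄ (p q : T.Walk i j), p.IsPath → q.IsPath → p = q)
    (P : ∀ i j : V, T.Walk i j) (hP : ∀ i j, (P i j).IsPath)
    {v i i' : V} {e : Sym2 V} (hii' : T.Adj i i') (hne : s(i, i') ≠ e) :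
    (e ∈ (P i v).edges ↔ e ∈ (P i' v).edges) := by
  constructor
  · intro h
    by_contra h'
    exact side_step huniq P hP hii' hne h' h
  · intro h
    by_contra h'
    refine side_step huniq P hP hii'.symm (fun hc => hne ?_) h' h
    rwa [Sym2.eq_swap] at hc

private lemma edge_mem_path_iff
    (huniq : ∀ ⦃i j : V⦄ (p q : T.Walk i j), p.IsPath → q.IsPath → p = q)
    (P : ∀ i j : V, T.Walk i j) (hP : ∀ i j, (P i j).IsPath)
    {u v : V} (huv : T.Adj u v) :
    ∀ {i j : V} (p : T.Walk i j), p.IsPath →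
      (s(u,v) ∈ p.edges ↔ ¬ ((s(u,v) ∈ (P i v).edges) ↔ (s(u,v) ∈ (P j v).edges))) := by
  have hPuv : (P u v).edges = [s(u,v)] := by
    have hcons : (SimpleGraph.Walk.cons huv SimpleGraph.Walk.nil).IsPath := by
      simp [SimpleGraph.Walk.cons_isPath_iff, huv.ne]
    rw [huniq (P u v) _ (hP u v) hcons]
    simp
  have hPvv : (P v v).edges = [] := by
    rw [huniq (P v v) SimpleGraph.Walk.nil (hP v v) SimpleGraph.Walk.IsPath.nil]
    rfl
  intro i j p
  induction p with
  | nil => intro _; simp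
  | @cons i w j h q ih =>
    intro hp
    have hq : q.IsPath := hp.of_cons
    have hiw : i ∉ q.support := ((SimpleGraph.Walk.cons_isPath_iff _ _).mp hp).2
    rw [SimpleGraph.Walk.edges_cons, List.mem_cons]
    by_cases he : s(u,v) = s(i, w)
    · have hnodup := hp.edges_nodup
      rw [SimpleGraph.Walk.edges_cons, List.nodup_cons] at hnodup
      have hnot : s(u,v) ∉ q.edges := he ▸ hnodup.1
      have hside : (s(u,v) ∈ (P w v).edges) ↔ (s(u,v) ∈ (P j v).edges) :=
        not_not.mp ((not_iff_not.mpr (ih hq)).mp hnot)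
      rcases Sym2.eq_iff.mp he.symm with ⟨hi, hw⟩ | ⟨hw, hi⟩
      · subst hi; subst hw
        simp [hPuv, hPvv, ← hside, he]
      · subst hi; subst hw
        have hj := hside.mp (by simp [hPuv])
        rw [he] at hj
        simp [hPvv, hj, he, Sym2.eq_swap]
    · have hstep := side_step_iff huniq P hP (v := v) h (fun hc => he hc.symm)
      rw [ih hq, hstep]
      simp [he]

end TreeSide

lemma treeNSD {n s : ℕ} {T : SimpleGraph (Fin n)} (hT : T.IsTree)
    (Wt : Fin n → Fin n → Matrix (Fin s) (Fin s) ℝ)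
    (hWtsym : ∀ i j, Wt i j = Wt j i)
    (hWtpd : ∀ i j, T.Adj i j → (Wt i j).PosDef)
    (D : Matrix (Fin n × Fin s) (Fin n × Fin s) ℝ)
    (hD : ∀ (i j : Fin n) (p : T.Walk i j), p.IsPath →
      ∀ a b : Fin s, D (i, a) (j, b) =
        ((p.darts.map fun d => Wt d.toProd.1 d.toProd.2).sum) a b)
    (x : Fin n × Fin s → ℝ) (hx : ∀ a, ∑ i, x (i, a) = 0) :
    x ⬝ᵥ D.mulVec x ≤ 0 := by
  classical
  have hup := hT.existsUnique_path
  set P : ∀ i j : Fin n, T.Walk i j := fun i j => (hup i j).exists.choose with hPdef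
  have hP : ∀ i j, (P i j).IsPath := fun i j => (hup i j).exists.choose_spec
  have huniq : ∀ ⦃i j : Fin n⦄ (p q : T.Walk i j), p.IsPath → q.IsPath → p = q :=
    fun i j p q hp hq => (hup i j).unique hp hq
  set We : Sym2 (Fin n) → Matrix (Fin s) (Fin s) ℝ := Sym2.lift ⟨Wt, hWtsym⟩ with hWe
  -- rewrite D entries as a sum over edges
  have key : ∀ (i j : Fin n) (a b : Fin s), D (i, a) (j, b) =
      ∑ e ∈ T.edgeFinset, (if e ∈ (P i j).edges then We e a b else 0) := by
    intro i j a b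
    rw [hD i j (P i j) (hP i j)]
    have h1 : ((P i j).darts.map fun d => Wt d.toProd.1 d.toProd.2)
        = ((P i j).edges.map We) := by
      rw [SimpleGraph.Walk.edges, List.map_map]
      rfl
    have hsub : (P i j).edges.toFinset ⊆ T.edgeFinset := by
      intro e he
      rw [List.mem_toFinset] at he
      exact SimpleGraph.mem_edgeFinset.mpr ((P i j).edges_subset_edgeSet he)
    have h2 : ((P i j).edges.map We).sum = ∑ e ∈ T.edgeFinset,
        (if e ∈ (P i j).edges then We e else 0) := by
      rw [← List.sum_toFinset _ (hP i j).edges_nodup]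
      have hmm : ∀ e, (e ∈ (P i j).edges) = (e ∈ (P i j).edges.toFinset) := fun e => by simp
      simp only [hmm]
      rw [Finset.sum_ite_mem, Finset.inter_eq_right.mpr hsub]
    rw [h1, h2, Matrix.sum_apply]
    apply Finset.sum_congr rfl
    intro e _
    split_ifs <;> simp
  -- main rearrangement
  have main : x ⬝ᵥ D.mulVec x = ∑ e ∈ T.edgeFinset, ∑ i, ∑ j,
      (if e ∈ (P i j).edges then ∑ a, ∑ b, x (i, a) * (We e a b * x (j, b)) else 0) := by
    calc x ⬝ᵥ D.mulVec x
        = ∑ p, ∑ q, ∑ e ∈ T.edgeFinset,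
            x p * ((if e ∈ (P p.1 q.1).edges then We e p.2 q.2 else 0) * x q) := by
          simp only [dotProduct, mulVec]
          refine Finset.sum_congr rfl fun p _ => ?_
          rw [Finset.mul_sum]
          refine Finset.sum_congr rfl fun q _ => ?_
          rw [key p.1 q.1 p.2 q.2, Finset.sum_mul, Finset.mul_sum]
      _ = ∑ e ∈ T.edgeFinset, ∑ p, ∑ q,
            x p * ((if e ∈ (P p.1 q.1).edges then We e p.2 q.2 else 0) * x q) := by
          rw [show (∑ p, ∑ q, ∑ e ∈ T.edgeFinset,
              x p * ((if e ∈ (P p.1 q.1).edges then We e p.2 q.2 else 0) * x q))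
              = ∑ p, ∑ e ∈ T.edgeFinset, ∑ q,
              x p * ((if e ∈ (P p.1 q.1).edges then We e p.2 q.2 else 0) * x q) from
            Finset.sum_congr rfl fun p _ => Finset.sum_comm]
          exact Finset.sum_comm
      _ = ∑ e ∈ T.edgeFinset, ∑ i, ∑ j,
            (if e ∈ (P i j).edges then ∑ a, ∑ b, x (i, a) * (We e a b * x (j, b)) else 0) := by
          refine Finset.sum_congr rfl fun e _ => ?_
          rw [Fintype.sum_prod_type]
          refine Finset.sum_congr rfl fun i _ => ?_
          rw [Finset.sum_comm]
          rw [Fintype.sum_prod_type]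
          refine Finset.sum_congr rfl fun j _ => ?_
          rw [Finset.sum_comm]
          split_ifs with hc
          · rfl
          · simp
  rw [main]
  -- each edge contributes a nonpositive amount
  refine Finset.sum_nonpos ?_
  intro e he
  induction e using Sym2.ind with
  | _ u v =>
  have huv : T.Adj u v := by simpa using he
  have hWe_uv : We s(u, v) = Wt u v := Sym2.lift_mk.{0,0} ..
  have char : ∀ i j : Fin n, (s(u,v) ∈ (P i j).edges ↔
      ¬ ((s(u,v) ∈ (P i v).edges) ↔ (s(u,v) ∈ (P j v).edges))) :=
    fun i j => edge_mem_path_iff huniq P hP huv (P i j) (hP i j)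
  set side : Fin n → Prop := fun i => s(u,v) ∈ (P i v).edges with hside
  have hdec : DecidablePred side := fun i => by unfold side; infer_instance
  set y : Fin s → ℝ := fun a => ∑ i ∈ Finset.univ.filter (fun i => side i), x (i, a) with hy
  set z : Fin s → ℝ := fun a => ∑ i ∈ Finset.univ.filter (fun i => ¬ side i), x (i, a) with hz
  have hyz : ∀ a, z a = - y a := by
    intro a
    have := hx a
    rw [← Finset.sum_filter_add_sum_filter_not Finset.univ side (fun i => x (i, a))] at this
    linarith
  have hbil : ∀ (i : Fin n) (S : Finset (Fin n)),
      ∑ j ∈ S, ∑ a, ∑ b, x (i, a) * (Wt u v a b * x (j, b))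
      = ∑ a, ∑ b, x (i, a) * (Wt u v a b * ∑ j ∈ S, x (j, b)) := by
    intro i S
    rw [Finset.sum_comm]
    refine Finset.sum_congr rfl fun a _ => ?_
    rw [Finset.sum_comm]
    refine Finset.sum_congr rfl fun b _ => ?_
    rw [Finset.mul_sum, Finset.mul_sum]
  have hbil2 : ∀ (S : Finset (Fin n)) (w : Fin s → ℝ),
      ∑ i ∈ S, ∑ a, ∑ b, x (i, a) * (Wt u v a b * w b)
      = ∑ a, ∑ b, (∑ i ∈ S, x (i, a)) * (Wt u v a b * w b) := by
    intro S w
    rw [Finset.sum_comm]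
    refine Finset.sum_congr rfl fun a _ => ?_
    rw [Finset.sum_comm]
    refine Finset.sum_congr rfl fun b _ => ?_
    rw [Finset.sum_mul]
  have hsplit : ∀ i : Fin n, ∑ j, (if s(u,v) ∈ (P i j).edges
      then ∑ a, ∑ b, x (i, a) * (We s(u,v) a b * x (j, b)) else 0)
      = if side i then ∑ a, ∑ b, x (i, a) * (Wt u v a b * z b)
        else ∑ a, ∑ b, x (i, a) * (Wt u v a b * y b) := by
    intro i
    simp only [hWe_uv]
    have hrw : (∑ j, (if s(u,v) ∈ (P i j).edges
          then ∑ a, ∑ b, x (i, a) * (Wt u v a b * x (j, b)) else 0))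
        = ∑ j, (if ¬ (side i ↔ side j)
          then ∑ a, ∑ b, x (i, a) * (Wt u v a b * x (j, b)) else 0) :=
      Finset.sum_congr rfl fun j _ => if_congr (char i j) rfl rfl
    rw [hrw]
    by_cases hsi : side i
    · rw [if_pos hsi]
      have hcond : ∀ j, (¬ (side i ↔ side j)) ↔ ¬ side j := fun j => by simp [hsi]
      simp only [hcond]
      rw [← Finset.sum_filter]
      exact hbil i _
    · rw [if_neg hsi]
      have hcond : ∀ j, (¬ (side i ↔ side j)) ↔ side j := fun j => by simp [hsi]
      simp only [hcond]
      rw [← Finset.sum_filter]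
      exact hbil i _
  calc ∑ i, ∑ j, (if s(u,v) ∈ (P i j).edges
        then ∑ a, ∑ b, x (i, a) * (We s(u,v) a b * x (j, b)) else 0)
      = ∑ i, (if side i then ∑ a, ∑ b, x (i, a) * (Wt u v a b * z b)
          else ∑ a, ∑ b, x (i, a) * (Wt u v a b * y b)) :=
        Finset.sum_congr rfl fun i _ => hsplit i
    _ = (∑ i ∈ Finset.univ.filter (fun i => side i), ∑ a, ∑ b, x (i, a) * (Wt u v a b * z b))
        + ∑ i ∈ Finset.univ.filter (fun i => ¬ side i), ∑ a, ∑ b, x (i, a) * (Wt u v a b * y b) :=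
        Finset.sum_ite _ _
    _ = (∑ a, ∑ b, y a * (Wt u v a b * z b)) + ∑ a, ∑ b, z a * (Wt u v a b * y b) := by
        rw [hbil2, hbil2]
    _ = -(2 * (y ⬝ᵥ (Wt u v).mulVec y)) := by
        have hdot : y ⬝ᵥ (Wt u v).mulVec y = ∑ a, ∑ b, y a * (Wt u v a b * y b) := by
          simp only [dotProduct, mulVec, Finset.mul_sum]
        simp only [hyz, hdot, mul_neg, neg_mul, Finset.sum_neg_distrib]
        ring
    _ ≤ 0 := by
        have hps := (hWtpd u v huv).posSemidef.dotProduct_mulVec_nonneg y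
        simp only [star_trivial] at hps
        nlinarith

section Lap
variable {n s : ℕ} (G : SimpleGraph (Fin n)) [DecidableRel G.Adj]
  (W : Fin n → Fin n → Matrix (Fin s) (Fin s) ℝ)

lemma lap_entry (i j : Fin n) (a b : Fin s) :
    lap n s G W (i, a) (j, b) = ∑ k ∈ Finset.univ.filter (fun k => G.Adj i k),
      ((if j = i then (W i k)⁻¹ a b else 0) - (if j = k then (W i k)⁻¹ a b else 0)) := by
  rw [lap]
  simp only [Matrix.of_apply]
  by_cases hij : i = j
  · subst hij
    rw [if_pos rfl, Matrix.sum_apply]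
    refine Finset.sum_congr rfl fun k hk => ?_
    rw [if_pos rfl, if_neg, sub_zero]
    intro hk'
    rw [← hk'] at hk
    exact G.irrefl (Finset.mem_filter.mp hk).2
  · rw [if_neg hij]
    have h0 : ∀ k, ((if j = i then (W i k)⁻¹ a b else 0) - (if j = k then (W i k)⁻¹ a b else 0))
        = - (if j = k then (W i k)⁻¹ a b else 0) := fun k => by
      rw [if_neg (Ne.symm hij), zero_sub]
    simp only [h0]
    rw [Finset.sum_neg_distrib, Finset.sum_ite_eq]
    simp only [Finset.mem_filter, Finset.mem_univ, true_and]
    split_ifs with h <;> simp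

lemma lap_colsum (hWsym : ∀ i j, W i j = W j i) (j : Fin n) (a b : Fin s) :
    ∑ i, lap n s G W (i, a) (j, b) = 0 := by
  simp only [lap_entry, Finset.sum_sub_distrib]
  have h1 : ∀ i, ∑ k ∈ Finset.univ.filter (fun k => G.Adj i k),
      (if j = i then (W i k)⁻¹ a b else 0)
      = if j = i then ∑ k ∈ Finset.univ.filter (fun k => G.Adj j k), (W j k)⁻¹ a b else 0 := by
    intro i
    split_ifs with h
    · subst h; simp
    · simp [if_neg h]
  have h2 : ∀ i, ∑ k ∈ Finset.univ.filter (fun k => G.Adj i k),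
      (if j = k then (W i k)⁻¹ a b else 0)
      = if G.Adj i j then (W i j)⁻¹ a b else 0 := by
    intro i
    rw [Finset.sum_ite_eq]
    simp only [Finset.mem_filter, Finset.mem_univ, true_and]
  simp only [h1, h2]
  rw [Finset.sum_ite_eq, ← Finset.sum_filter]
  simp only [Finset.mem_univ, if_pos]
  rw [sub_eq_zero]
  rw [show (Finset.univ.filter (fun i => G.Adj i j)) = (Finset.univ.filter (fun i => G.Adj j i)) by
    apply Finset.filter_congr; intro i _; simp [G.adj_comm]]
  refine Finset.sum_congr rfl fun i _ => ?_
  rw [hWsym j i]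

end Lap

section Lap2
variable {n s : ℕ} (G : SimpleGraph (Fin n)) [DecidableRel G.Adj]
  (W : Fin n → Fin n → Matrix (Fin s) (Fin s) ℝ)

lemma lap_quad (hWsym : ∀ i j, W i j = W j i)
    (hWpd : ∀ i j, G.Adj i j → (W i j).PosDef) (q : Fin n × Fin s → ℝ) :
    0 ≤ q ⬝ᵥ (lap n s G W).mulVec q := by
  classical
  set blk : Fin n → Fin s → ℝ := fun i a => q (i, a) with hblk
  set F : Fin n → Fin n → ℝ :=
    fun i k => blk i ⬝ᵥ ((W i k)⁻¹ *ᵥ (blk i - blk k)) with hF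
  have key : q ⬝ᵥ (lap n s G W).mulVec q
      = ∑ i, ∑ k ∈ Finset.univ.filter (fun k => G.Adj i k), F i k := by
    calc q ⬝ᵥ (lap n s G W).mulVec q
        = ∑ i, ∑ a, q (i, a) * ∑ j, ∑ b, lap n s G W (i, a) (j, b) * q (j, b) := by
          simp only [dotProduct, mulVec, Fintype.sum_prod_type]
      _ = ∑ i, ∑ k ∈ Finset.univ.filter (fun k => G.Adj i k), F i k := by
          refine Finset.sum_congr rfl fun i _ => ?_
          have h3 : ∀ a, ∑ j, ∑ b, lap n s G W (i, a) (j, b) * q (j, b)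
              = ∑ k ∈ Finset.univ.filter (fun k => G.Adj i k),
                (((W i k)⁻¹ *ᵥ (blk i - blk k)) a) := by
            intro a
            simp only [lap_entry, Finset.sum_mul]
            rw [show (∑ j, ∑ b, ∑ k ∈ Finset.univ.filter (fun k => G.Adj i k),
                ((if j = i then (W i k)⁻¹ a b else 0) - (if j = k then (W i k)⁻¹ a b else 0))
                  * q (j, b))
                = ∑ k ∈ Finset.univ.filter (fun k => G.Adj i k), ∑ j, ∑ b,
                ((if j = i then (W i k)⁻¹ a b else 0) - (if j = k then (W i k)⁻¹ a b else 0))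
                  * q (j, b) from by
              rw [show (∑ j, ∑ b, ∑ k ∈ Finset.univ.filter (fun k => G.Adj i k),
                  ((if j = i then (W i k)⁻¹ a b else 0) - (if j = k then (W i k)⁻¹ a b else 0))
                    * q (j, b))
                  = ∑ j, ∑ k ∈ Finset.univ.filter (fun k => G.Adj i k), ∑ b,
                  ((if j = i then (W i k)⁻¹ a b else 0) - (if j = k then (W i k)⁻¹ a b else 0))
                    * q (j, b) from
                Finset.sum_congr rfl fun j _ => Finset.sum_comm]
              exact Finset.sum_comm]
            refine Finset.sum_congr rfl fun k _ => ?_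
            simp only [sub_mul, ite_mul, zero_mul, Finset.sum_sub_distrib]
            rw [Finset.sum_comm]
            rw [show (∑ j, ∑ b, (if j = k then (W i k)⁻¹ a b * q (j, b) else 0))
                = ∑ b, ∑ j, (if j = k then (W i k)⁻¹ a b * q (j, b) else 0) from
              Finset.sum_comm]
            simp only [Finset.sum_ite_eq', Finset.mem_univ, if_pos]
            rw [Matrix.mulVec, dotProduct]
            simp only [Pi.sub_apply, mul_sub, Finset.sum_sub_distrib]
            rfl
          simp only [h3]
          simp only [Finset.mul_sum]
          rw [Finset.sum_comm]
          rfl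
  rw [key]
  have hswap : ∑ i, ∑ k ∈ Finset.univ.filter (fun k => G.Adj i k), F i k
      = ∑ i, ∑ k, if G.Adj i k then F k i else 0 := by
    simp only [Finset.sum_filter]
    rw [Finset.sum_comm]
    refine Finset.sum_congr rfl fun i _ => Finset.sum_congr rfl fun k _ => ?_
    exact if_congr (G.adj_comm k i) rfl rfl
  have hpair : ∀ i k, G.Adj i k → 0 ≤ F i k + F k i := by
    intro i k h
    have hA : ((W i k)⁻¹).PosDef := (hWpd i k h).inv
    have hd := hA.posSemidef.dotProduct_mulVec_nonneg (blk i - blk k)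
    simp only [star_trivial] at hd
    have : F i k + F k i = (blk i - blk k) ⬝ᵥ ((W i k)⁻¹ *ᵥ (blk i - blk k)) := by
      rw [hF]
      simp only
      rw [hWsym k i]
      rw [show blk k - blk i = -(blk i - blk k) from by ring]
      rw [Matrix.mulVec_neg, dotProduct_neg, sub_dotProduct]
      ring
    linarith [this ▸ hd]
  have h2S : 0 ≤ ∑ i, ∑ k ∈ Finset.univ.filter (fun k => G.Adj i k), F i k
      + ∑ i, ∑ k ∈ Finset.univ.filter (fun k => G.Adj i k), F i k := by
    nth_rewrite 2 [hswap]
    simp only [Finset.sum_filter]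
    rw [← Finset.sum_add_distrib]
    refine Finset.sum_nonneg fun i _ => ?_
    rw [← Finset.sum_add_distrib]
    refine Finset.sum_nonneg fun k _ => ?_
    split_ifs with h
    · exact hpair i k h
    · simp
  linarith

lemma lap_quad' (hWsym : ∀ i j, W i j = W j i)
    (hWpd : ∀ i j, G.Adj i j → (W i j).PosDef) (q : Fin n × Fin s → ℝ) :
    0 ≤ ((lap n s G W).mulVec q) ⬝ᵥ q := by
  rw [dotProduct_comm]
  exact lap_quad G W hWsym hWpd q

end Lap2

/-- For every β ≥ 0, the matrix (D⁻¹ − βL)⁻¹ is negative semidefinite on the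
null space of J. -/
theorem stmt6 (n s : ℕ) (hn : 0 < n) (hs : 0 < s)
    (T : SimpleGraph (Fin n)) (hT : T.IsTree)
    (Wt : Fin n → Fin n → Matrix (Fin s) (Fin s) ℝ)
    (hWtsym : ∀ i j, Wt i j = Wt j i)
    (hWtpd : ∀ i j, T.Adj i j → (Wt i j).PosDef)
    (D : Matrix (Fin n × Fin s) (Fin n × Fin s) ℝ)
    (hD : ∀ (i j : Fin n) (p : T.Walk i j), p.IsPath →
      ∀ a b : Fin s, D (i, a) (j, b) =
        ((p.darts.map fun d => Wt d.toProd.1 d.toProd.2).sum) a b)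
    (hDdet : IsUnit D.det)
    (G : SimpleGraph (Fin n)) [DecidableRel G.Adj] (hG : G.Connected)
    (W : Fin n → Fin n → Matrix (Fin s) (Fin s) ℝ)
    (hWsym : ∀ i j, W i j = W j i)
    (hWpd : ∀ i j, G.Adj i j → (W i j).PosDef)
    (β : ℝ) (hβ : 0 ≤ β) :
    ∀ p : Fin n × Fin s → ℝ, (Jmat n s).mulVec p = 0 →
      p ⬝ᵥ ((D⁻¹ - β • lap n s G W)⁻¹).mulVec p ≤ 0 := by

  intro p hp
  classical
  set L := lap n s G W with hL
  set A := D⁻¹ - β • L with hA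
  by_cases hAdet : IsUnit A.det
  · set q := A⁻¹.mulVec p with hq
    have hAq : A.mulVec q = p := by
      rw [hq, Matrix.mulVec_mulVec, Matrix.mul_nonsing_inv _ hAdet, Matrix.one_mulVec]
    set r := D⁻¹.mulVec q with hr
    have hDr : D.mulVec r = q := by
      rw [hr, Matrix.mulVec_mulVec, Matrix.mul_nonsing_inv _ hDdet, Matrix.one_mulVec]
    have hpq : p = D⁻¹.mulVec q - β • (L.mulVec q) := by
      rw [← hAq, hA, Matrix.sub_mulVec, Matrix.smul_mulVec]
    have hsum : ∀ a, ∑ i, p (i, a) = 0 := by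
      intro a
      have h0 := congrFun hp (⟨0, hn⟩, a)
      simp only [Matrix.mulVec, Jmat, dotProduct, Matrix.of_apply, Pi.zero_apply] at h0
      rw [Fintype.sum_prod_type] at h0
      have h1 : ∀ j : Fin n, ∑ b, (if a = b then (1:ℝ) else 0) * p (j, b) = p (j, a) := by
        intro j
        simp only [ite_mul, one_mul, zero_mul]
        rw [Finset.sum_ite_eq]
        simp
      simp only [h1] at h0
      exact h0
    have hLsum : ∀ a, ∑ i, (L.mulVec q) (i, a) = 0 := by
      intro a
      simp only [Matrix.mulVec, dotProduct]
      rw [Finset.sum_comm]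
      refine Finset.sum_eq_zero fun jb _ => ?_
      rw [← Finset.sum_mul]
      have hcol : ∑ i, L (i, a) jb = 0 := by
        have := lap_colsum G W hWsym jb.1 a jb.2
        simpa using this
      rw [hcol, zero_mul]
    have hrsum : ∀ a, ∑ i, r (i, a) = 0 := by
      intro a
      have hpt : ∀ i : Fin n, r (i, a) = p (i, a) + β * (L.mulVec q) (i, a) := by
        intro i
        have h2 := congrFun hpq (i, a)
        simp only [Pi.sub_apply, Pi.smul_apply, smul_eq_mul] at h2
        rw [← hr] at h2
        linarith
      simp only [hpt]
      rw [Finset.sum_add_distrib, hsum a, ← Finset.mul_sum, hLsum a]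
      ring
    have htree := treeNSD hT Wt hWtsym hWtpd D hD r hrsum
    have hlap := lap_quad G W hWsym hWpd q
    have hgoal : p ⬝ᵥ A⁻¹.mulVec p = r ⬝ᵥ D.mulVec r - β * (q ⬝ᵥ L.mulVec q) := by
      rw [← hq]
      calc p ⬝ᵥ q = (D⁻¹.mulVec q - β • L.mulVec q) ⬝ᵥ q := by rw [← hpq]
        _ = (D⁻¹.mulVec q) ⬝ᵥ q - β * ((L.mulVec q) ⬝ᵥ q) := by
            rw [sub_dotProduct, smul_dotProduct, smul_eq_mul]
        _ = r ⬝ᵥ D.mulVec r - β * (q ⬝ᵥ L.mulVec q) := by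
            rw [dotProduct_comm (L.mulVec q) q, ← hr]
            nth_rewrite 1 [← hDr]
            rfl

    rw [hA] at hgoal
    rw [hgoal]
    have hb : 0 ≤ β * (q ⬝ᵥ L.mulVec q) := mul_nonneg hβ hlap
    linarith
  · rw [hA] at hAdet
    rw [Matrix.nonsing_inv_apply_not_isUnit _ hAdet]
    simp
end
end
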